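/- Let n, p be positive integers with gcd(n, n+p) = 1. For every polynomial P in the span of {T_i(x)T_j(y) : (i,j) ∈ ℕ₀², i/(2(n+p)) + j/(2n) < 1}, the quadrature formula (1/π²)∫∫_{[−1,1]²} P(x,y)(1−x²)^{−1/2}(1−y²)^{−1/2} dx dy = ∑_{A ∈ LD_{n,p}} w_A P(A) is exact, where w_A = 1/(2n(n+p)) if A is a vertex point, 1/(n(n+p)) if A is an edge point, and 2/(n(n+p)) if A is an interior self-intersection point. -/

import Mathlib

open Real

noncomputable def node (n p i j : ℕ) : ℝ × ℝ :=
  (Real.cos (i * π / (n + p)), Real.cos (j * π / n))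

noncomputable def LDidx (n p : ℕ) : Finset (ℕ × ℕ) :=
  (Finset.range (n + p + 1) ×ˢ Finset.range (n + 1)).filter (fun ij => (ij.1 + ij.2) % 2 = 0)

def isVertex (n p : ℕ) (A : ℝ × ℝ) : Prop :=
  A = (1, 1) ∨ A = ((-1 : ℝ) ^ n, (-1 : ℝ) ^ (n + p))

def isBoundary (A : ℝ × ℝ) : Prop := |A.1| = 1 ∨ |A.2| = 1

open Classical in
noncomputable def lisWeight (n p : ℕ) (A : ℝ × ℝ) : ℝ :=
  if isVertex n p A then 1 / (2 * n * (n + p))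
  else if isBoundary A then 1 / (n * (n + p))
  else 2 / (n * (n + p))


open MeasureTheory


lemma cos_lt_one' {θ : ℝ} (h0 : 0 < θ) (hπ : θ < π) : Real.cos θ < 1 := by
  simpa using Real.strictAntiOn_cos (Set.left_mem_Icc.2 Real.pi_pos.le) ⟨h0.le, hπ.le⟩ h0

lemma neg_one_lt_cos' {θ : ℝ} (h0 : 0 < θ) (hπ : θ < π) : -1 < Real.cos θ := by
  simpa using Real.strictAntiOn_cos ⟨h0.le, hπ.le⟩ (Set.right_mem_Icc.2 Real.pi_pos.le) hπ

lemma cos_image_Ioo : Real.cos '' Set.Ioo 0 π = Set.Ioo (-1 : ℝ) 1 := by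
  ext y
  constructor
  · rintro ⟨θ, ⟨h0, hπ⟩, rfl⟩
    exact ⟨neg_one_lt_cos' h0 hπ, cos_lt_one' h0 hπ⟩
  · rintro ⟨h1, h2⟩
    refine ⟨Real.arccos y, ⟨Real.arccos_pos.2 h2, ?_⟩, Real.cos_arccos h1.le h2.le⟩
    exact lt_of_le_of_ne (Real.arccos_le_pi y) (fun h => absurd (Real.arccos_eq_pi.1 h) (by linarith))

/-- change of variables -/
lemma cv (g : ℝ → ℝ) :
    ∫ x in (-1 : ℝ)..1, g x = ∫ θ in Set.Ioo (0:ℝ) π, Real.sin θ * g (Real.cos θ) := by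
  rw [intervalIntegral.integral_of_le (by norm_num : (-1:ℝ) ≤ 1),
    MeasureTheory.integral_Ioc_eq_integral_Ioo, ← cos_image_Ioo,
    MeasureTheory.integral_image_eq_integral_abs_deriv_smul measurableSet_Ioo
      (fun x _ => (Real.hasDerivAt_cos x).hasDerivWithinAt)
      (Real.injOn_cos.mono Set.Ioo_subset_Icc_self) g]
  refine MeasureTheory.setIntegral_congr_fun measurableSet_Ioo (fun θ hθ => ?_)
  have hs : 0 < Real.sin θ := Real.sin_pos_of_pos_of_lt_pi hθ.1 hθ.2
  rw [abs_neg, abs_of_pos hs, smul_eq_mul]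

lemma Jval (k : ℕ) : ∫ θ in (0:ℝ)..π, Real.cos (k * θ) = if k = 0 then π else 0 := by
  rcases Nat.eq_zero_or_pos k with hk | hk
  · simp [hk]
  · have hk' : (k:ℝ) ≠ 0 := Nat.cast_ne_zero.2 hk.ne'
    rw [if_neg hk.ne']
    have := intervalIntegral.integral_comp_mul_left (fun x => Real.cos x) hk' (a := 0) (b := π)
    simp only [mul_zero] at this
    rw [this, integral_cos]
    simp [Real.sin_nat_mul_pi]

lemma ioo_pi (f : ℝ → ℝ) : ∫ x in Set.Ioo (0:ℝ) π, f x = ∫ x in (0:ℝ)..π, f x := by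
  rw [intervalIntegral.integral_of_le Real.pi_pos.le, MeasureTheory.integral_Ioc_eq_integral_Ioo]

lemma cv2 (Q : ℝ → ℝ) : ∫ y in (-1:ℝ)..1, Q y / Real.sqrt (1 - y^2)
    = ∫ φ in (0:ℝ)..π, Q (Real.cos φ) := by
  rw [cv (fun y => Q y / Real.sqrt (1 - y^2)), ← ioo_pi]
  refine MeasureTheory.setIntegral_congr_fun measurableSet_Ioo (fun φ hφ => ?_)
  have hs : 0 < Real.sin φ := Real.sin_pos_of_pos_of_lt_pi hφ.1 hφ.2
  have h1 : Real.sqrt (1 - Real.cos φ ^ 2) = Real.sin φ := by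
    rw [← Real.sin_sq, Real.sqrt_sq hs.le]
  rw [h1, mul_div_cancel₀ _ hs.ne']

lemma lhs_val (M N : ℕ) (hM : 0 < M) (hN : 0 < N) (c : ℕ × ℕ → ℝ) (P : ℝ → ℝ → ℝ)
    (hPc : ∀ θ φ : ℝ, P (Real.cos θ) (Real.cos φ) =
      ∑ ij ∈ Finset.range M ×ˢ Finset.range N,
        c ij * Real.cos (ij.1 * θ) * Real.cos (ij.2 * φ)) :
    (1 / π ^ 2) * ∫ x in (-1 : ℝ)..1, ∫ y in (-1 : ℝ)..1,
        P x y / (Real.sqrt (1 - x ^ 2) * Real.sqrt (1 - y ^ 2)) = c (0, 0) := by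
  have step1 : ∀ x : ℝ, (∫ y in (-1 : ℝ)..1, P x y / (Real.sqrt (1 - x ^ 2) * Real.sqrt (1 - y ^ 2)))
      = (∫ y in (-1 : ℝ)..1, P x y / Real.sqrt (1 - y ^ 2)) / Real.sqrt (1 - x ^ 2) := by
    intro x
    rw [← intervalIntegral.integral_div]
    refine intervalIntegral.integral_congr (fun y _ => ?_)
    rw [div_div, mul_comm]
  simp_rw [step1]
  rw [cv2 (fun x => ∫ y in (-1 : ℝ)..1, P x y / Real.sqrt (1 - y ^ 2))]
  simp_rw [cv2, hPc]
  have hInt : ∀ θ : ℝ, ∀ ij ∈ Finset.range M ×ˢ Finset.range N,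
      IntervalIntegrable (fun φ => c ij * Real.cos (ij.1 * θ) * Real.cos (ij.2 * φ))
        MeasureTheory.volume 0 π := by
    intro θ ij _
    exact (Continuous.intervalIntegrable (by fun_prop) 0 π)
  have inner_eval : ∀ θ : ℝ, (∫ φ in (0:ℝ)..π,
      ∑ ij ∈ Finset.range M ×ˢ Finset.range N,
        c ij * Real.cos (ij.1 * θ) * Real.cos (ij.2 * φ))
      = ∑ ij ∈ Finset.range M ×ˢ Finset.range N,
        (c ij * (if ij.2 = 0 then π else 0)) * Real.cos (ij.1 * θ) := by
    intro θ
    rw [intervalIntegral.integral_finset_sum (hInt θ)]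
    refine Finset.sum_congr rfl (fun ij _ => ?_)
    rw [intervalIntegral.integral_const_mul, Jval]
    ring
  simp_rw [inner_eval]
  rw [intervalIntegral.integral_finset_sum (by
    intro ij _
    exact (Continuous.intervalIntegrable (by fun_prop) 0 π))]
  have outer_eval : ∀ ij : ℕ × ℕ, (∫ θ in (0:ℝ)..π,
      (c ij * (if ij.2 = 0 then π else 0)) * Real.cos (ij.1 * θ))
      = c ij * (if ij.2 = 0 then π else 0) * (if ij.1 = 0 then π else 0) := by
    intro ij
    rw [intervalIntegral.integral_const_mul, Jval]
  simp_rw [outer_eval]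
  rw [Finset.sum_eq_single_of_mem (0, 0)
    (Finset.mem_product.2 ⟨Finset.mem_range.2 hM, Finset.mem_range.2 hN⟩)]
  · have hπ : π ≠ 0 := Real.pi_ne_zero
    simp only [if_pos rfl]
    field_simp
    rw [if_pos trivial]; ring
  · intro ij _ hne
    rcases Nat.eq_zero_or_pos ij.1 with h1 | h1
    · rcases Nat.eq_zero_or_pos ij.2 with h2 | h2
      · exact absurd (Prod.ext h1 h2) hne
      · simp [h2.ne']
    · simp [h1.ne']

noncomputable def eps (a m : ℕ) : ℝ := if a = 0 ∨ a = m then 1/2 else 1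

lemma abs_cos_lt (m a : ℕ) (h0 : 0 < a) (h2 : a < m) : |Real.cos ((a:ℝ)*π/m)| < 1 := by
  have hm : 0 < m := lt_trans h0 h2
  have hm' : (0:ℝ) < m := by exact_mod_cast hm
  have hang0 : 0 < (a:ℝ)*π/m := by
    have : (0:ℝ) < a := by exact_mod_cast h0
    positivity
  have hang1 : (a:ℝ)*π/m < π := by
    rw [div_lt_iff₀ hm']
    have : (a:ℝ) < m := by exact_mod_cast h2
    nlinarith [Real.pi_pos]
  exact abs_lt.2 ⟨neg_one_lt_cos' hang0 hang1, cos_lt_one' hang0 hang1⟩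

lemma cos_last (m : ℕ) (hm : 0 < m) : Real.cos ((m:ℝ)*π/m) = -1 := by
  have hm' : (m:ℝ) ≠ 0 := Nat.cast_ne_zero.2 hm.ne'
  have : (m:ℝ)*π/m = π := by field_simp
  rw [this, Real.cos_pi]

lemma weight_eq (n p : ℕ) (hn : 0 < n) (hp : 0 < p) (hcop : Nat.Coprime n (n + p))
    (a b : ℕ) (hab : (a, b) ∈ LDidx n p) :
    lisWeight n p (node n p a b) = 2 / (n * (n + p)) * eps a (n + p) * eps b n := by
  have hm : 0 < n + p := Nat.lt_of_lt_of_le hn (Nat.le_add_right n p)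
  obtain ⟨hmem, hpar⟩ := Finset.mem_filter.1 hab
  obtain ⟨ha, hb⟩ := Finset.mem_product.1 hmem
  have ha' : a ≤ n + p := Nat.lt_succ_iff.1 (Finset.mem_range.1 ha)
  have hb' : b ≤ n := Nat.lt_succ_iff.1 (Finset.mem_range.1 hb)
  have hpar' : (a + b) % 2 = 0 := hpar
  clear hpar hmem hab ha hb
  have hnp : ¬(n % 2 = 0 ∧ (n + p) % 2 = 0) := by
    rintro ⟨h1, h2⟩
    have := Nat.dvd_gcd (Nat.dvd_of_mod_eq_zero h1) (Nat.dvd_of_mod_eq_zero h2)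
    rw [hcop] at this
    omega
  have hn' : (n:ℝ) ≠ 0 := Nat.cast_ne_zero.2 hn.ne'
  have hmr : (n:ℝ) + (p:ℝ) ≠ 0 := by positivity
  have hcoord : node n p a b = (Real.cos ((a:ℝ)*π/((n:ℝ)+(p:ℝ))), Real.cos ((b:ℝ)*π/(n:ℝ))) := rfl
  have hvm : Real.cos (((n:ℝ)+(p:ℝ))*π/((n:ℝ)+(p:ℝ))) = -1 := by
    have := cos_last (n+p) hm
    push_cast at this
    exact this
  have cA0 : a = 0 → Real.cos ((a:ℝ)*π/((n:ℝ)+(p:ℝ))) = 1 := by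
    intro h; rw [h]; simp
  have cAm : a = n + p → Real.cos ((a:ℝ)*π/((n:ℝ)+(p:ℝ))) = -1 := by
    intro h; rw [h]; push_cast; exact hvm
  have cB0 : b = 0 → Real.cos ((b:ℝ)*π/(n:ℝ)) = 1 := by
    intro h; rw [h]; simp
  have cBn : b = n → Real.cos ((b:ℝ)*π/(n:ℝ)) = -1 := by
    intro h; rw [h]; exact cos_last n hn
  have haint : a ≠ 0 → a ≠ n + p → |Real.cos ((a:ℝ)*π/((n:ℝ)+(p:ℝ)))| < 1 := by
    intro h1 h2
    have := abs_cos_lt (n+p) a (Nat.pos_of_ne_zero h1) (lt_of_le_of_ne ha' h2)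
    push_cast at this
    exact this
  have hbint : b ≠ 0 → b ≠ n → |Real.cos ((b:ℝ)*π/(n:ℝ))| < 1 := by
    intro h1 h2
    exact abs_cos_lt n b (Nat.pos_of_ne_zero h1) (lt_of_le_of_ne hb' h2)
  by_cases hae : a = 0 ∨ a = n + p
  · by_cases hbe : b = 0 ∨ b = n
    · -- vertex
      have hvert : isVertex n p (node n p a b) := by
        rw [hcoord]
        rcases hae with ha2 | ha2
        · rcases hbe with hb2 | hb2
          · left; rw [cA0 ha2, cB0 hb2]
          · right
            have e1 : ((-1:ℝ))^n = 1 := (Nat.even_iff.2 (by omega)).neg_one_pow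
            have e2 : ((-1:ℝ))^(n+p) = -1 := (Nat.odd_iff.2 (by omega)).neg_one_pow
            rw [cA0 ha2, cBn hb2, e1, e2]
        · rcases hbe with hb2 | hb2
          · right
            have e1 : ((-1:ℝ))^n = -1 := (Nat.odd_iff.2 (by omega)).neg_one_pow
            have e2 : ((-1:ℝ))^(n+p) = 1 := (Nat.even_iff.2 (by omega)).neg_one_pow
            rw [cAm ha2, cB0 hb2, e1, e2]
          · right
            have e1 : ((-1:ℝ))^n = -1 := (Nat.odd_iff.2 (by omega)).neg_one_pow
            have e2 : ((-1:ℝ))^(n+p) = -1 := (Nat.odd_iff.2 (by omega)).neg_one_pow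
            rw [cAm ha2, cBn hb2, e1, e2]
      rw [lisWeight, if_pos hvert]
      rw [eps, if_pos hae, eps, if_pos hbe]
      push_cast
      field_simp
    · -- a endpoint, b interior: boundary
      push_neg at hbe
      have hbint' := hbint hbe.1 hbe.2
      have hnv : ¬ isVertex n p (node n p a b) := by
        rintro (h | h) <;>
        · have h2 := congrArg Prod.snd h
          rw [hcoord] at h2
          simp only at h2
          rw [h2] at hbint'
          simp [abs_pow] at hbint'
      have hbd : isBoundary (node n p a b) := by
        left
        rw [hcoord]
        simp only
        rcases hae with ha2 | ha2
        · rw [cA0 ha2]; simp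
        · rw [cAm ha2]; simp
      rw [lisWeight, if_neg hnv, if_pos hbd]
      rw [eps, if_pos hae, eps, if_neg (by push_neg; exact hbe)]
      push_cast
      field_simp
  · -- a interior
    push_neg at hae
    have haint' := haint hae.1 hae.2
    have hnv : ¬ isVertex n p (node n p a b) := by
      rintro (h | h) <;>
      · have h2 := congrArg Prod.fst h
        rw [hcoord] at h2
        simp only at h2
        rw [h2] at haint'
        simp [abs_pow] at haint'
    by_cases hbe : b = 0 ∨ b = n
    · have hbd : isBoundary (node n p a b) := by
        right
        rw [hcoord]
        simp only
        rcases hbe with hb2 | hb2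
        · rw [cB0 hb2]; simp
        · rw [cBn hb2]; simp
      rw [lisWeight, if_neg hnv, if_pos hbd]
      rw [eps, if_neg (by push_neg; exact hae), eps, if_pos hbe]
      push_cast
      field_simp
    · push_neg at hbe
      have hbint' := hbint hbe.1 hbe.2
      have hnb : ¬ isBoundary (node n p a b) := by
        rintro (h | h) <;> rw [hcoord] at h <;> simp only at h
        · rw [h] at haint'; simp at haint'
        · rw [h] at hbint'; simp at hbint'
      rw [lisWeight, if_neg hnv, if_neg hnb]
      rw [eps, if_neg (by push_neg; exact hae), eps, if_neg (by push_neg; exact hbe)]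
      push_cast
      ring

lemma twist (k m a : ℕ) (hm : 0 < m) :
    Real.cos (((k + m : ℕ):ℝ) * ((a:ℝ)*π/(m:ℝ))) = (-1)^a * Real.cos ((k:ℝ)*((a:ℝ)*π/(m:ℝ))) := by
  have hm' : (m:ℝ) ≠ 0 := Nat.cast_ne_zero.2 hm.ne'
  have h : (((k + m : ℕ)):ℝ) * ((a:ℝ)*π/(m:ℝ)) = (k:ℝ)*((a:ℝ)*π/(m:ℝ)) + (a:ℝ)*π := by
    push_cast
    field_simp
  rw [h, Real.cos_add, Real.sin_nat_mul_pi]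
  have : Real.cos ((a:ℝ)*π) = (-1)^a := by
    have := Real.cos_nat_mul_pi_sub 0 a
    simpa using this
  rw [this]
  ring

lemma sum_prod_split (s t : Finset ℕ) (c : ℝ) (f g F G : ℕ → ℝ) :
    ∑ a ∈ s, ∑ b ∈ t, c * (f a * g b + F a * G b)
      = c * ((∑ a ∈ s, f a) * (∑ b ∈ t, g b) + (∑ a ∈ s, F a) * (∑ b ∈ t, G b)) := by
  simp_rw [mul_add, Finset.sum_add_distrib, ← Finset.mul_sum, Finset.sum_mul_sum,
    Finset.mul_sum]

lemma cos_nat_pi (a : ℕ) : Real.cos (a * π) = (-1) ^ a := by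
  have := Real.cos_nat_mul_pi_sub 0 a
  simpa using this

lemma eps_split (m : ℕ) (hm : 0 < m) (d : ℕ → ℝ) (a : ℕ) :
    eps a m * d a = d a - (if a = 0 then (1/2) * d 0 else 0) - (if a = m then (1/2) * d m else 0) := by
  unfold eps
  rcases eq_or_ne a 0 with rfl | h0
  · rw [if_neg hm.ne, if_pos rfl]
    simp [hm.ne']
    ring
  · rcases eq_or_ne a m with rfl | hm'
    · simp [h0]
      ring
    · simp [h0, hm']

lemma sum_eps (m : ℕ) (hm : 0 < m) : ∑ a ∈ Finset.range (m+1), eps a m = m := by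
  have : ∀ a ∈ Finset.range (m+1), eps a m * (fun _ => (1:ℝ)) a
      = 1 - (if a = 0 then (1/2) * 1 else 0) - (if a = m then (1/2) * 1 else 0) :=
    fun a _ => eps_split m hm (fun _ => 1) a
  calc ∑ a ∈ Finset.range (m+1), eps a m
      = ∑ a ∈ Finset.range (m+1), eps a m * (fun _ => (1:ℝ)) a := by simp
    _ = ∑ a ∈ Finset.range (m+1), ((1:ℝ) - (if a = 0 then (1/2) * 1 else 0)
        - (if a = m then (1/2) * 1 else 0)) := Finset.sum_congr rfl this
    _ = (m:ℝ) := by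
        rw [Finset.sum_sub_distrib, Finset.sum_sub_distrib, Finset.sum_const,
          Finset.sum_ite_eq' _ 0, Finset.sum_ite_eq' _ m]
        simp [Finset.mem_range, Nat.lt_succ_self, hm]
        push_cast
        ring


lemma S_eval (m : ℕ) (hm : 0 < m) (k : ℕ) :
    ∑ a ∈ Finset.range (m+1), eps a m * Real.cos (k * (a * π / m))
      = if 2*m ∣ k then (m:ℝ) else 0 := by
  have hm' : (m:ℝ) ≠ 0 := Nat.cast_ne_zero.2 hm.ne'
  by_cases hdvd : 2*m ∣ k
  · rw [if_pos hdvd]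
    obtain ⟨t, rfl⟩ := hdvd
    have hcos : ∀ a : ℕ, Real.cos ((2*m*t : ℕ) * ((a:ℝ) * π / m)) = 1 := by
      intro a
      have : ((2*m*t : ℕ) : ℝ) * ((a:ℝ) * π / m) = (t*a : ℕ) * (2 * π) := by
        push_cast
        field_simp
      rw [this, Real.cos_nat_mul_two_pi]
    simp_rw [hcos, mul_one]
    exact sum_eps m hm
  · rw [if_neg hdvd]
    set θ := (k:ℝ) * π / (2*m) with hθdef
    have hsin : Real.sin θ ≠ 0 := by
      intro h
      obtain ⟨q, hq⟩ := Real.sin_eq_zero_iff.1 h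
      have h3 : ((q:ℝ)*(2*m))*π = (k:ℝ)*π := by
        have h2 : θ * (2*m) = (k:ℝ)*π := by rw [hθdef]; field_simp
        calc ((q:ℝ)*(2*m))*π = (↑q*π)*(2*↑m) := by ring
        _ = θ*(2*m) := by rw [hq]
        _ = _ := h2
      have h4 : (q:ℝ)*(2*m) = k := mul_right_cancel₀ Real.pi_ne_zero h3
      have h5' : ((2*m : ℕ) : ℝ) * (q:ℝ) = ((k:ℕ):ℝ) := by push_cast; linarith
      have h5 : ((2*m : ℕ) : ℤ) * q = (k:ℤ) := by exact_mod_cast h5'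
      exact hdvd (Int.natCast_dvd_natCast.mp ⟨q, h5.symm⟩)
    set g : ℕ → ℝ := fun a => Real.sin ((2*(a:ℝ) - 1) * θ) with hg
    have hterm : ∀ a : ℕ, 2 * Real.sin θ * (eps a m * Real.cos (k * (a * π / m)))
        = eps a m * ((fun a => g (a+1) - g a) a) := by
      intro a
      have h1 : (k:ℝ) * ((a:ℝ) * π / m) = 2*(a:ℝ)*θ := by
        rw [hθdef]; field_simp
      have e1 : (2*(((a+1):ℕ):ℝ) - 1)*θ = 2*(a:ℝ)*θ + θ := by push_cast; ring
      have e2 : (2*((a:ℕ):ℝ) - 1)*θ = 2*(a:ℝ)*θ - θ := by ring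
      simp only [hg, h1, e1, e2, Real.sin_add, Real.sin_sub]
      ring
    have key : (2 * Real.sin θ) * (∑ a ∈ Finset.range (m+1),
        eps a m * Real.cos (k * (a * π / m))) = 0 := by
      rw [Finset.mul_sum]
      rw [Finset.sum_congr rfl (fun a _ => hterm a),
        Finset.sum_congr rfl (fun a _ => eps_split m hm (fun a => g (a+1) - g a) a),
        Finset.sum_sub_distrib, Finset.sum_sub_distrib,
        Finset.sum_range_sub g (m+1), Finset.sum_ite_eq' _ 0, Finset.sum_ite_eq' _ m]
      rw [if_pos (Finset.mem_range.2 (Nat.succ_pos m)), if_pos (Finset.mem_range.2 (Nat.lt_succ_self m))]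
      have hg0 : g 0 = -Real.sin θ := by
        simp [hg]
      have hg1 : g (0+1) = Real.sin θ := by
        norm_num [hg]
      have hgm : g m = -((-1)^k * Real.sin θ) := by
        have e3 : (2*((m:ℕ):ℝ) - 1)*θ = (k:ℝ)*π - θ := by rw [hθdef]; field_simp
        simp only [hg, e3]
        exact Real.sin_nat_mul_pi_sub θ k
      have hgm1 : g (m+1) = (-1)^k * Real.sin θ := by
        have e4 : (2*(((m+1):ℕ):ℝ) - 1)*θ = (k:ℝ)*π + θ := by rw [hθdef]; push_cast; field_simp; ring
        simp only [hg, e4, Real.sin_add, Real.sin_nat_mul_pi, cos_nat_pi]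
        ring
      rw [hg0, hg1, hgm, hgm1]
      ring
    rcases mul_eq_zero.mp key with h | h
    · exact absurd h (by simpa using hsin)
    · exact h


lemma rhs_sum (n p : ℕ) (hn : 0 < n) (hp : 0 < p) (hcop : Nat.Coprime n (n + p)) (i j : ℕ) :
    ∑ ab ∈ LDidx n p, lisWeight n p (node n p ab.1 ab.2) *
      (Real.cos ((i:ℝ) * ((ab.1:ℝ) * π / ((n+p:ℕ):ℝ))) *
        Real.cos ((j:ℝ) * ((ab.2:ℝ) * π / (n:ℝ))))
    = (if 2*(n+p) ∣ i ∧ 2*n ∣ j then (1:ℝ) else 0)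
      + (if 2*(n+p) ∣ i + (n+p) ∧ 2*n ∣ j + n then (1:ℝ) else 0) := by
  have hm : 0 < n + p := Nat.lt_of_lt_of_le hn (Nat.le_add_right n p)
  have hn' : (n:ℝ) ≠ 0 := Nat.cast_ne_zero.2 hn.ne'
  have hmr : ((n+p:ℕ):ℝ) ≠ 0 := Nat.cast_ne_zero.2 hm.ne'
  have hW : ∀ ab ∈ LDidx n p, lisWeight n p (node n p ab.1 ab.2) *
      (Real.cos ((i:ℝ) * ((ab.1:ℝ) * π / ((n+p:ℕ):ℝ))) *
        Real.cos ((j:ℝ) * ((ab.2:ℝ) * π / (n:ℝ))))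
      = 2 / ((n:ℝ) * ((n:ℝ) + (p:ℝ))) * eps ab.1 (n + p) * eps ab.2 n *
      (Real.cos ((i:ℝ) * ((ab.1:ℝ) * π / ((n+p:ℕ):ℝ))) *
        Real.cos ((j:ℝ) * ((ab.2:ℝ) * π / (n:ℝ)))) := by
    intro ab hab
    rw [weight_eq n p hn hp hcop ab.1 ab.2 (by rwa [Prod.mk.eta])]
  rw [Finset.sum_congr rfl hW]
  simp only [LDidx]
  rw [Finset.sum_filter, Finset.sum_product]
  have hpt : ∀ a b : ℕ,
      (if (a + b) % 2 = 0 then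
        2 / ((n:ℝ) * ((n:ℝ) + (p:ℝ))) * eps a (n + p) * eps b n *
          (Real.cos ((i:ℝ) * ((a:ℝ) * π / ((n+p:ℕ):ℝ))) *
            Real.cos ((j:ℝ) * ((b:ℝ) * π / (n:ℝ)))) else 0)
      = 1 / ((n:ℝ) * ((n:ℝ) + (p:ℝ))) *
        ((eps a (n+p) * Real.cos ((i:ℝ) * ((a:ℝ) * π / ((n+p:ℕ):ℝ)))) *
          (eps b n * Real.cos ((j:ℝ) * ((b:ℝ) * π / (n:ℝ))))
        + (eps a (n+p) * Real.cos (((i+(n+p):ℕ):ℝ) * ((a:ℝ) * π / ((n+p:ℕ):ℝ)))) *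
          (eps b n * Real.cos (((j+n:ℕ):ℝ) * ((b:ℝ) * π / (n:ℝ))))) := by
    intro a b
    rw [twist i (n+p) a hm, twist j n b hn]
    have h2 : (eps a (n+p) * ((-1:ℝ)^a * Real.cos ((i:ℝ) * ((a:ℝ) * π / ((n+p:ℕ):ℝ))))) *
        (eps b n * ((-1:ℝ)^b * Real.cos ((j:ℝ) * ((b:ℝ) * π / (n:ℝ)))))
        = ((-1:ℝ)^a * (-1:ℝ)^b) *
          ((eps a (n+p) * Real.cos ((i:ℝ) * ((a:ℝ) * π / ((n+p:ℕ):ℝ)))) *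
            (eps b n * Real.cos ((j:ℝ) * ((b:ℝ) * π / (n:ℝ))))) := by ring
    rw [h2]
    by_cases hpar : (a + b) % 2 = 0
    · rw [if_pos hpar]
      have h1 : ((-1:ℝ))^a * (-1:ℝ)^b = 1 := by
        rw [← pow_add]; exact (Nat.even_iff.2 hpar).neg_one_pow
      rw [h1, one_mul]
      push_cast
      ring
    · rw [if_neg hpar]
      have h1 : ((-1:ℝ))^a * (-1:ℝ)^b = -1 := by
        rw [← pow_add]; exact (Nat.odd_iff.2 (by omega)).neg_one_pow
      rw [h1]
      push_cast
      ring
  rw [Finset.sum_congr rfl (fun a _ => Finset.sum_congr rfl (fun b _ => hpt a b)),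
    sum_prod_split, S_eval (n+p) hm i, S_eval n hn j, S_eval (n+p) hm (i+(n+p)),
    S_eval n hn (j+n)]
  have hmr' : ((n+p:ℕ):ℝ) = (n:ℝ) + (p:ℝ) := by push_cast; ring
  rw [hmr'] at *
  have hsplitif : ∀ (A B : Prop) (dA : Decidable A) (dB : Decidable B),
      (if A ∧ B then (1:ℝ) else 0) = (if A then (1:ℝ) else 0) * (if B then 1 else 0) := by
    intro A B dA dB
    split_ifs <;> simp_all
  rw [hsplitif, hsplitif]
  split_ifs <;> field_simp <;> ring

theorem key_sum (n p : ℕ) (hn : 0 < n) (hp : 0 < p) (hcop : Nat.Coprime n (n + p))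
    (c : ℕ × ℕ → ℝ)
    (hsupp : ∀ i j : ℕ, ¬((i : ℝ) / (2 * (n + p)) + (j : ℝ) / (2 * n) < 1) → c (i, j) = 0) :
    ∑ ij ∈ Finset.range (2 * (n + p)) ×ˢ Finset.range (2 * n),
      c ij * ((if 2*(n+p) ∣ ij.1 ∧ 2*n ∣ ij.2 then (1:ℝ) else 0)
        + (if 2*(n+p) ∣ ij.1 + (n+p) ∧ 2*n ∣ ij.2 + n then (1:ℝ) else 0)) = c (0, 0) := by
  have hm : 0 < n + p := Nat.lt_of_lt_of_le hn (Nat.le_add_right n p)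
  have hstep : ∀ ij ∈ Finset.range (2 * (n + p)) ×ˢ Finset.range (2 * n),
      c ij * ((if 2*(n+p) ∣ ij.1 ∧ 2*n ∣ ij.2 then (1:ℝ) else 0)
        + (if 2*(n+p) ∣ ij.1 + (n+p) ∧ 2*n ∣ ij.2 + n then (1:ℝ) else 0))
      = (if ij = (0,0) then c ij else 0) + (if ij = (n+p, n) then c ij else 0) := by
    intro ij hij
    obtain ⟨h1, h2⟩ := Finset.mem_product.1 hij
    rw [Finset.mem_range] at h1 h2
    have e1 : (if 2*(n+p) ∣ ij.1 ∧ 2*n ∣ ij.2 then (1:ℝ) else 0)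
        = (if ij = (0,0) then 1 else 0) := by
      by_cases h : ij = (0,0)
      · rw [if_pos h, if_pos (by simp [h])]
      · rw [if_neg h, if_neg]
        rintro ⟨hd1, hd2⟩
        exact h (Prod.ext (Nat.eq_zero_of_dvd_of_lt hd1 h1)
          (Nat.eq_zero_of_dvd_of_lt hd2 h2))
    have e2 : (if 2*(n+p) ∣ ij.1 + (n+p) ∧ 2*n ∣ ij.2 + n then (1:ℝ) else 0)
        = (if ij = (n+p, n) then 1 else 0) := by
      by_cases h : ij = (n+p, n)
      · rw [if_pos h, if_pos (by rw [h]; exact ⟨⟨1, by ring⟩, ⟨1, by ring⟩⟩)]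
      · rw [if_neg h, if_neg]
        rintro ⟨⟨t1, ht1⟩, ⟨t2, ht2⟩⟩
        have h4 : t1 < 2 := by
          by_contra hge
          push_neg at hge
          have : 2*(n+p)*2 ≤ 2*(n+p)*t1 := Nat.mul_le_mul_left _ hge
          omega
        have h5 : t2 < 2 := by
          by_contra hge
          push_neg at hge
          have : 2*n*2 ≤ 2*n*t2 := Nat.mul_le_mul_left _ hge
          omega
        apply h
        apply Prod.ext <;> interval_cases t1 <;> interval_cases t2 <;> omega
    rw [e1, e2]; simp [mul_add, mul_ite]
  rw [Finset.sum_congr rfl hstep, Finset.sum_add_distrib,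
    Finset.sum_ite_eq' _ ((0:ℕ), (0:ℕ)), Finset.sum_ite_eq' _ (n+p, n),
    if_pos (Finset.mem_product.2 ⟨Finset.mem_range.2 (by omega), Finset.mem_range.2 (by omega)⟩),
    if_pos (Finset.mem_product.2 ⟨Finset.mem_range.2 (by omega), Finset.mem_range.2 (by omega)⟩)]
  have hz : c (n+p, n) = 0 := by
    apply hsupp
    have hmr : ((n:ℝ) + (p:ℝ)) ≠ 0 := by positivity
    have hn' : (n:ℝ) ≠ 0 := Nat.cast_ne_zero.2 hn.ne'
    have : ((n+p:ℕ):ℝ) / (2 * ((n:ℝ)+(p:ℝ))) + (n:ℝ) / (2 * (n:ℝ)) = 1 := by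
      push_cast
      field_simp
      ring
    rw [this]
    simp
  rw [hz, add_zero]
theorem lissajous_quadrature_exact (n p : ℕ) (hn : 0 < n) (hp : 0 < p)
    (hcop : Nat.Coprime n (n + p))
    (c : ℕ × ℕ → ℝ)
    (hsupp : ∀ i j : ℕ, ¬((i : ℝ) / (2 * (n + p)) + (j : ℝ) / (2 * n) < 1) → c (i, j) = 0)
    (P : ℝ → ℝ → ℝ)
    (hP : ∀ x y, P x y = ∑ ij ∈ Finset.range (2 * (n + p)) ×ˢ Finset.range (2 * n),
      c ij * (Polynomial.Chebyshev.T ℝ ij.1).eval x * (Polynomial.Chebyshev.T ℝ ij.2).eval y) :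
    (1 / π ^ 2) * ∫ x in (-1 : ℝ)..1, ∫ y in (-1 : ℝ)..1,
        P x y / (Real.sqrt (1 - x ^ 2) * Real.sqrt (1 - y ^ 2)) =
      ∑ ij ∈ LDidx n p,
        lisWeight n p (node n p ij.1 ij.2) *
          P (node n p ij.1 ij.2).1 (node n p ij.1 ij.2).2 := by
  have hm : 0 < n + p := Nat.lt_of_lt_of_le hn (Nat.le_add_right n p)
  have hPc : ∀ θ φ : ℝ, P (Real.cos θ) (Real.cos φ) =
      ∑ ij ∈ Finset.range (2 * (n + p)) ×ˢ Finset.range (2 * n),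
        c ij * Real.cos ((ij.1 : ℝ) * θ) * Real.cos ((ij.2 : ℝ) * φ) := by
    intro θ φ
    rw [hP]
    refine Finset.sum_congr rfl fun ij _ => ?_
    rw [Polynomial.Chebyshev.T_real_cos, Polynomial.Chebyshev.T_real_cos]
    norm_cast
  rw [lhs_val (2*(n+p)) (2*n) (by omega) (by omega) c P hPc]
  have hnodeP : ∀ ab ∈ LDidx n p,
      lisWeight n p (node n p ab.1 ab.2) * P (node n p ab.1 ab.2).1 (node n p ab.1 ab.2).2
      = ∑ ij ∈ Finset.range (2 * (n + p)) ×ˢ Finset.range (2 * n),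
          c ij * (lisWeight n p (node n p ab.1 ab.2) *
            (Real.cos ((ij.1:ℝ) * ((ab.1:ℝ) * π / ((n+p:ℕ):ℝ))) *
              Real.cos ((ij.2:ℝ) * ((ab.2:ℝ) * π / (n:ℝ))))) := by
    intro ab _
    have h1 : (node n p ab.1 ab.2).1 = Real.cos ((ab.1:ℝ) * π / ((n+p:ℕ):ℝ)) := by
      simp only [node]
      norm_cast
    have h2 : (node n p ab.1 ab.2).2 = Real.cos ((ab.2:ℝ) * π / (n:ℝ)) := rfl
    rw [h1, h2, hPc, Finset.mul_sum]
    refine Finset.sum_congr rfl fun ij _ => ?_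
    ring
  rw [Finset.sum_congr rfl hnodeP, Finset.sum_comm]
  have hfin : ∀ ij ∈ Finset.range (2 * (n + p)) ×ˢ Finset.range (2 * n),
      (∑ ab ∈ LDidx n p, c ij * (lisWeight n p (node n p ab.1 ab.2) *
        (Real.cos ((ij.1:ℝ) * ((ab.1:ℝ) * π / ((n+p:ℕ):ℝ))) *
          Real.cos ((ij.2:ℝ) * ((ab.2:ℝ) * π / (n:ℝ))))))
      = c ij * ((if 2*(n+p) ∣ ij.1 ∧ 2*n ∣ ij.2 then (1:ℝ) else 0)
        + (if 2*(n+p) ∣ ij.1 + (n+p) ∧ 2*n ∣ ij.2 + n then (1:ℝ) else 0)) := by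
    intro ij _
    rw [← Finset.mul_sum, rhs_sum n p hn hp hcop ij.1 ij.2]
  rw [Finset.sum_congr rfl hfin, key_sum n p hn hp hcop c hsupp]
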